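/- Lemma (Case (i), upper bound). Suppose Assumptions 1 and 2 hold, let E ∈ ℝ, and let e* ∈ D(E) minimize d_l + d_u over D(E). If E + δ·Σ_j p̄_j ≤ Σ_j ē'_j, then Σ_j min(ē'_j, e*_j + δ·p̄_j) = E + δ·Σ_j p̄_j; equivalently, e*_j + δ·p̄_j ≤ ē'_j for every j. -/
import Mathlib


open Finset

/-- Lemma 2(b) (Case (i), upper bound). -/
theorem case_i_upper_bound
    (N : ℕ) (hN : 1 ≤ N) (δ : ℝ) (hδ : 0 < δ)
    (plb pub elb eub elb' eub' : Fin N → ℝ)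
    (hp : ∀ j, plb j ≤ pub j) (he : ∀ j, elb j ≤ eub j)
    (he' : ∀ j, elb' j ≤ eub' j)
    -- Assumption 1 (consistency of constraints)
    (hA1 : ∀ j, ∀ e : ℝ, elb j ≤ e → e ≤ eub j →
      max (elb' j) (e + δ * plb j) ≤ min (eub' j) (e + δ * pub j))
    -- Assumption 2(a)
    (hA2a : ∀ j, ∃ e : ℝ, elb j ≤ e ∧ e ≤ eub j ∧
      elb' j ≤ e + δ * plb j ∧ e + δ * pub j ≤ eub' j)
    -- Assumption 2(b)
    (hA2b : ∀ j, elb j + δ * plb j ≤ elb' j ∧ eub' j ≤ eub j + δ * pub j)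
    (E : ℝ) (estar : Fin N → ℝ)
    -- e* ∈ D(E)
    (hmem : (∀ j, elb j ≤ estar j ∧ estar j ≤ eub j) ∧ ∑ j, estar j = E)
    -- e* minimizes d_l + d_u over D(E)
    (hmin : ∀ e : Fin N → ℝ,
      ((∀ j, elb j ≤ e j ∧ e j ≤ eub j) ∧ ∑ j, e j = E) →
      ((∑ j, (max (estar j + δ * plb j) (elb' j) - (estar j + δ * plb j))) +
       (∑ j, ((estar j + δ * pub j) - min (estar j + δ * pub j) (eub' j)))) ≤
      ((∑ j, (max (e j + δ * plb j) (elb' j) - (e j + δ * plb j))) +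
       (∑ j, ((e j + δ * pub j) - min (e j + δ * pub j) (eub' j)))))
    -- case hypothesis
    (hcase : E + δ * ∑ j, pub j ≤ ∑ j, eub' j) :
    (∑ j, min (eub' j) (estar j + δ * pub j) = E + δ * ∑ j, pub j) ∧
    (∀ j, estar j + δ * pub j ≤ eub' j) := by
  obtain ⟨hbd, hsum⟩ := hmem
  have hkey : ∀ j, estar j + δ * pub j ≤ eub' j := by
    by_contra hcon
    push_neg at hcon
    obtain ⟨j, hj⟩ := hcon
    have hex : ∃ k, estar k + δ * pub k < eub' k := by
      by_contra hk
      push_neg at hk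
      have h1 : ∑ i, eub' i < ∑ i, (estar i + δ * pub i) :=
        Finset.sum_lt_sum (fun i _ => hk i) ⟨j, mem_univ j, hj⟩
      rw [Finset.sum_add_distrib, hsum, ← Finset.mul_sum] at h1
      linarith
    obtain ⟨k, hk⟩ := hex
    have hjk : j ≠ k := by
      intro h; rw [h] at hj; linarith
    have hdlj : elb' j < estar j + δ * plb j := by
      by_contra h
      push_neg at h
      obtain ⟨e, he1, he2, he3, he4⟩ := hA2a j
      linarith
    have hjl : elb j < estar j := by
      obtain ⟨e, he1, he2, he3, he4⟩ := hA2a j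
      linarith
    have hku : estar k < eub k := by
      have h2 := (hA2b k).2
      linarith
    set ε := min (min (estar j + δ * pub j - eub' j) (eub' k - (estar k + δ * pub k)))
        (min (min (estar j + δ * plb j - elb' j) (estar j - elb j)) (eub k - estar k)) with hεdef
    have hε : 0 < ε := by
      refine lt_min (lt_min ?_ ?_) (lt_min (lt_min ?_ ?_) ?_) <;> linarith
    have hA : ε ≤ estar j + δ * pub j - eub' j :=
      le_trans (min_le_left _ _) (min_le_left _ _)
    have hB : ε ≤ eub' k - (estar k + δ * pub k) :=
      le_trans (min_le_left _ _) (min_le_right _ _)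
    have hC : ε ≤ estar j + δ * plb j - elb' j :=
      le_trans (min_le_right _ _) (le_trans (min_le_left _ _) (min_le_left _ _))
    have hD : ε ≤ estar j - elb j :=
      le_trans (min_le_right _ _) (le_trans (min_le_left _ _) (min_le_right _ _))
    have hF : ε ≤ eub k - estar k :=
      le_trans (min_le_right _ _) (min_le_right _ _)
    set e' : Fin N → ℝ :=
      fun i => estar i + (if i = j then -ε else 0) + (if i = k then ε else 0) with he'def
    have he'j : e' j = estar j - ε := by
      simp [he'def, hjk]
      ring
    have he'k : e' k = estar k + ε := by
      simp [he'def, Ne.symm hjk]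
    have he'other : ∀ i, i ≠ j → i ≠ k → e' i = estar i := by
      intro i h1 h2
      simp [he'def, h1, h2]
    have hfeas : (∀ i, elb i ≤ e' i ∧ e' i ≤ eub i) ∧ ∑ i, e' i = E := by
      constructor
      · intro i
        by_cases hij : i = j
        · subst hij
          rw [he'j]
          constructor
          · linarith
          · linarith [(hbd i).2]
        by_cases hik : i = k
        · subst hik
          rw [he'k]
          constructor
          · linarith [(hbd i).1]
          · linarith
        · rw [he'other i hij hik]; exact hbd i
      · have h1 : ∑ i, e' i = (∑ i, estar i) + (∑ i, if i = j then -ε else (0:ℝ))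
            + (∑ i, if i = k then ε else (0:ℝ)) := by
          simp [he'def, Finset.sum_add_distrib]
        rw [h1, Finset.sum_ite_eq' univ j fun _ => -ε,
          Finset.sum_ite_eq' univ k fun _ => ε]
        simp [hsum]
    have hterm : ∀ i ∈ (univ : Finset (Fin N)),
        (max (e' i + δ * plb i) (elb' i) - (e' i + δ * plb i)) +
          ((e' i + δ * pub i) - min (e' i + δ * pub i) (eub' i)) ≤
        ((max (estar i + δ * plb i) (elb' i) - (estar i + δ * plb i)) +
          ((estar i + δ * pub i) - min (estar i + δ * pub i) (eub' i))) +
          (if i = j then -ε else 0) := by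
      intro i _
      by_cases hij : i = j
      · subst hij
        rw [he'j, if_pos rfl]
        rw [max_eq_left (by linarith), max_eq_left (by linarith),
          min_eq_right (by linarith), min_eq_right (by linarith)]
        ring_nf
        linarith
      by_cases hik : i = k
      · subst hik
        rw [he'k, if_neg hij]
        rw [min_eq_left (by linarith), min_eq_left (by linarith)]
        have h1 : max (estar i + ε + δ * plb i) (elb' i) ≤
            max (estar i + δ * plb i) (elb' i) + ε :=
          max_le (by linarith [le_max_left (estar i + δ * plb i) (elb' i)])
            (by linarith [le_max_right (estar i + δ * plb i) (elb' i)])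
        linarith
      · rw [he'other i hij hik, if_neg hij]
        linarith
    have hS := Finset.sum_le_sum hterm
    rw [Finset.sum_add_distrib, Finset.sum_add_distrib, Finset.sum_add_distrib,
      Finset.sum_ite_eq' univ j fun _ => -ε] at hS
    simp only [mem_univ, if_pos] at hS
    have hm := hmin e' hfeas
    linarith
  refine ⟨?_, hkey⟩
  have h1 : ∀ i ∈ (univ : Finset (Fin N)),
      min (eub' i) (estar i + δ * pub i) = estar i + δ * pub i := by
    intro i _
    exact min_eq_right (hkey i)
  rw [Finset.sum_congr rfl h1, Finset.sum_add_distrib, hsum, ← Finset.mul_sum]
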